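/- arXiv:2002.12317 — 2 statements merged into one kernel-verified Lean document; each statement's English description precedes it below -/
import Mathlib

section
/- Let P be an n×n real matrix with operator norm ‖P‖ < 1. Define L(w) = ⟨w, Pw⟩ − Σ_{i=1}^n log(Σ_{j=1}^n exp(w_i w_j)) for w ∈ ℝ^n. Then any global maximizer w of L satisfies ‖w‖² ≤ n·log(n)/(1 − ‖P‖). -/
open scoped BigOperators RealInnerProductSpace

theorem stmt_0 (n : ℕ) (hn : 2 ≤ n) (P : Matrix (Fin n) (Fin n) ℝ)
    (hP : ‖Matrix.toEuclideanCLM (𝕜 := ℝ) P‖ < 1)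
    (L : EuclideanSpace ℝ (Fin n) → ℝ)
    (hL : ∀ w : EuclideanSpace ℝ (Fin n),
      L w = (∑ i, w i * ∑ j, P i j * w j)
        - ∑ i, Real.log (∑ j, Real.exp (w i * w j)))
    (w : EuclideanSpace ℝ (Fin n)) (hw : ∀ v, L v ≤ L w) :
    ‖w‖ ^ 2 ≤ n * Real.log n / (1 - ‖Matrix.toEuclideanCLM (𝕜 := ℝ) P‖) := by
  set M := Matrix.toEuclideanCLM (𝕜 := ℝ) P with hM
  have hpos : (0:ℝ) < 1 - ‖M‖ := by linarith
  -- L 0 = -(n * log n)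
  have h0 : L 0 = -(n * Real.log n) := by
    rw [hL 0]
    have : ∀ i : Fin n, (0 : EuclideanSpace ℝ (Fin n)) i = 0 := fun i => rfl
    simp [this]
  -- quadratic form equals inner product
  have hMw : ∀ i, M w i = ∑ j, P i j * w j := fun i => rfl
  have hquad : (∑ i, w i * ∑ j, P i j * w j) = (inner ℝ w (M w) : ℝ) := by
    simp only [PiLp.inner_apply, RCLike.inner_apply, starRingEnd_apply, star_trivial]
    exact Finset.sum_congr rfl fun i _ => by rw [hMw i, mul_comm]
  -- bound on quadratic form
  have hqb : (inner ℝ w (M w) : ℝ) ≤ ‖M‖ * ‖w‖ ^ 2 := by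
    calc (inner ℝ w (M w) : ℝ) ≤ ‖w‖ * ‖M w‖ := real_inner_le_norm w (M w)
      _ ≤ ‖w‖ * (‖M‖ * ‖w‖) := by
          have := M.le_opNorm w
          have hnn : (0:ℝ) ≤ ‖w‖ := norm_nonneg _
          nlinarith [norm_nonneg (M w)]
      _ = ‖M‖ * ‖w‖ ^ 2 := by ring
  -- lower bound on log sums
  have hlog : ∀ i : Fin n, w i ^ 2 ≤ Real.log (∑ j, Real.exp (w i * w j)) := by
    intro i
    have hspos : (0:ℝ) < ∑ j, Real.exp (w i * w j) :=
      Finset.sum_pos (fun j _ => Real.exp_pos _) ⟨i, Finset.mem_univ i⟩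
    rw [Real.le_log_iff_exp_le hspos]
    have : Real.exp (w i * w i) ≤ ∑ j, Real.exp (w i * w j) :=
      Finset.single_le_sum (f := fun j => Real.exp (w i * w j)) (fun j _ => (Real.exp_pos _).le) (Finset.mem_univ i)
    simpa [sq] using this
  have hnormsq : ‖w‖ ^ 2 = ∑ i, w i ^ 2 := by
    rw [← real_inner_self_eq_norm_sq, PiLp.inner_apply]
    simp [RCLike.inner_apply, sq]
  have hsum : ‖w‖ ^ 2 ≤ ∑ i, Real.log (∑ j, Real.exp (w i * w j)) := by
    rw [hnormsq]; exact Finset.sum_le_sum fun i _ => hlog i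
  have hchain : -(n * Real.log n) ≤ ‖M‖ * ‖w‖ ^ 2 - ‖w‖ ^ 2 := by
    have h1 : L 0 ≤ L w := hw 0
    rw [h0, hL w, hquad] at h1
    linarith
  rw [le_div_iff₀ hpos]
  nlinarith
end

section
/- Let w, v ∈ ℝ^n satisfy ‖w‖_∞ ≤ C n^{−1/2} and ‖v‖_∞ ≤ C n^{−1/2}. Define L(w,v) = ⟨w, Pv⟩ − Σ_{i=1}^n log(Σ_{j=1}^n exp(w_i v_j)). Then |L(w,v) − ⟨w, Pv⟩ + (1/n)(Σ_i w_i)(Σ_j v_j) + (1/(2n))Σ_{i,j} w_i² v_j² + n log n| ≤ C'·n^{−1}, where C' depends only on C. -/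
open Finset Real

-- |exp y - (1 + y + y^2/2)| ≤ |y|^3 for |y| ≤ 1
lemma aux_exp3 {y : ℝ} (hy : |y| ≤ 1) :
    |Real.exp y - (1 + y + y ^ 2 / 2)| ≤ |y| ^ 3 := by
  have h := Real.exp_bound hy (n := 3) (by norm_num)
  have hs : (∑ i ∈ Finset.range 3, y ^ i / (Nat.factorial i)) = 1 + y + y ^ 2 / 2 := by
    simp [Finset.sum_range_succ, Nat.factorial]
  rw [hs] at h
  calc |Real.exp y - (1 + y + y ^ 2 / 2)| ≤ |y| ^ 3 * ((3:ℕ).succ / ((Nat.factorial 3) * 3)) := h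
    _ ≤ |y| ^ 3 * 1 := by
        apply mul_le_mul_of_nonneg_left _ (by positivity)
        norm_num [Nat.factorial]
    _ = |y| ^ 3 := mul_one _

-- |log(1+s) - s| ≤ 2 s^2 for |s| ≤ 1/2
lemma aux_log2 {s : ℝ} (hs : |s| ≤ 1 / 2) :
    |Real.log (1 + s) - s| ≤ 2 * s ^ 2 := by
  have h1 : |(-s)| < 1 := by rw [abs_neg]; linarith
  have h := Real.abs_log_sub_add_sum_range_le h1 1
  simp only [Finset.sum_range_one, pow_one] at h
  rw [abs_neg] at h
  have : 1 - -s = 1 + s := by ring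
  rw [this] at h
  have h2 : (-s) ^ (0 + 1) / ((0:ℕ) + 1 : ℝ) + Real.log (1 + s) = Real.log (1 + s) - s := by
    push_cast; ring
  rw [h2] at h
  calc |Real.log (1 + s) - s| ≤ |s| ^ (1 + 1) / (1 - |s|) := h
    _ ≤ |s| ^ 2 / (1 / 2) := by
        apply div_le_div_of_nonneg_left (by positivity) (by norm_num) (by linarith)
    _ = 2 * s ^ 2 := by rw [sq_abs]; ring

-- sharp per-index estimate
lemma aux_main {n : ℕ} (hn : 1 ≤ n) {a : ℝ} (ha4 : a ≤ 1 / 4)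
    (x : Fin n → ℝ) (hx : ∀ j, |x j| ≤ a) :
    |Real.log (∑ j, Real.exp (x j))
      - (Real.log n + (1 / n) * ∑ j, x j + (1 / (2 * n)) * ∑ j, (x j) ^ 2)|
      ≤ 9 * a ^ 2 := by
  have hn0 : (0:ℝ) < n := by exact_mod_cast hn
  have ha0 : 0 ≤ a := le_trans (abs_nonneg _) (hx ⟨0, hn⟩)
  have ha1 : a ≤ 1 := by linarith
  set s : ℝ := (∑ j, (Real.exp (x j) - 1)) / n with hs_def
  -- |s| ≤ 2a
  have hs : |s| ≤ 2 * a := by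
    rw [hs_def, abs_div, abs_of_pos hn0]
    rw [div_le_iff₀ hn0]
    calc |∑ j, (Real.exp (x j) - 1)| ≤ ∑ j : Fin n, |Real.exp (x j) - 1| :=
          Finset.abs_sum_le_sum_abs _ _
      _ ≤ ∑ j : Fin n, 2 * a := by
          apply Finset.sum_le_sum
          intro j _
          calc |Real.exp (x j) - 1| ≤ 2 * |x j| :=
                Real.abs_exp_sub_one_le (le_trans (hx j) ha1)
            _ ≤ 2 * a := by linarith [hx j]
      _ = 2 * a * n := by rw [Finset.sum_const, Finset.card_univ, Fintype.card_fin,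
            nsmul_eq_mul]; ring
  have hs2 : |s| ≤ 1 / 2 := by linarith
  -- sum = n (1 + s)
  have hsum : (∑ j, Real.exp (x j)) = n * (1 + s) := by
    have : (∑ j, (Real.exp (x j) - 1)) = (∑ j, Real.exp (x j)) - n := by
      rw [Finset.sum_sub_distrib, Finset.sum_const, Finset.card_univ, Fintype.card_fin,
        nsmul_eq_mul, mul_one]
    rw [hs_def] at *
    field_simp [this]
    rw [this]; ring
  have h1s : (0:ℝ) < 1 + s := by
    have := abs_le.1 hs2
    linarith [this.1]
  have hlog : Real.log (∑ j, Real.exp (x j)) = Real.log n + Real.log (1 + s) := by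
    rw [hsum, Real.log_mul (ne_of_gt hn0) (ne_of_gt h1s)]
  -- |s - t| ≤ a^3
  have hst : |s - ((1 / n) * ∑ j, x j + (1 / (2 * n)) * ∑ j, (x j) ^ 2)| ≤ a ^ 3 := by
    have key : s - ((1 / n) * ∑ j, x j + (1 / (2 * n)) * ∑ j, (x j) ^ 2)
        = (∑ j, (Real.exp (x j) - (1 + x j + (x j) ^ 2 / 2))) / n := by
      have expand : ∑ j, (Real.exp (x j) - (1 + x j + (x j) ^ 2 / 2))
          = (∑ j, Real.exp (x j)) - ((n:ℝ) + (∑ j, x j) + (∑ j, (x j) ^ 2) / 2) := by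
        rw [Finset.sum_sub_distrib]
        congr 1
        rw [Finset.sum_add_distrib, Finset.sum_add_distrib, Finset.sum_const,
          Finset.card_univ, Fintype.card_fin, nsmul_eq_mul, mul_one, ← Finset.sum_div]
      rw [expand, hs_def]
      field_simp
      simp only [Finset.sum_sub_distrib, Finset.sum_const, Finset.card_univ, Fintype.card_fin, nsmul_eq_mul]
      ring
    rw [key, abs_div, abs_of_pos hn0, div_le_iff₀ hn0]
    calc |∑ j, (Real.exp (x j) - (1 + x j + (x j) ^ 2 / 2))|
        ≤ ∑ j : Fin n, |Real.exp (x j) - (1 + x j + (x j) ^ 2 / 2)| :=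
          Finset.abs_sum_le_sum_abs _ _
      _ ≤ ∑ j : Fin n, a ^ 3 := by
          apply Finset.sum_le_sum
          intro j _
          calc |Real.exp (x j) - (1 + x j + (x j) ^ 2 / 2)| ≤ |x j| ^ 3 :=
                aux_exp3 (le_trans (hx j) ha1)
            _ ≤ a ^ 3 := by
                apply pow_le_pow_left₀ (abs_nonneg _) (hx j)
      _ = a ^ 3 * n := by rw [Finset.sum_const, Finset.card_univ, Fintype.card_fin,
            nsmul_eq_mul]; ring
  -- combine
  have hls : |Real.log (1 + s) - s| ≤ 2 * s ^ 2 := aux_log2 hs2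
  have hs2' : s ^ 2 ≤ (2 * a) ^ 2 := by
    rw [← sq_abs]
    apply pow_le_pow_left₀ (abs_nonneg _) hs
  have ha3 : a ^ 3 ≤ a ^ 2 := by nlinarith
  calc |Real.log (∑ j, Real.exp (x j))
      - (Real.log n + (1 / n) * ∑ j, x j + (1 / (2 * n)) * ∑ j, (x j) ^ 2)|
      = |(Real.log (1 + s) - s) + (s - ((1 / n) * ∑ j, x j + (1 / (2 * n)) * ∑ j, (x j) ^ 2))| := by
        rw [hlog]; congr 1; ring
    _ ≤ |Real.log (1 + s) - s| + |s - ((1 / n) * ∑ j, x j + (1 / (2 * n)) * ∑ j, (x j) ^ 2)| :=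
        abs_add_le _ _
    _ ≤ 2 * s ^ 2 + a ^ 3 := by linarith
    _ ≤ 9 * a ^ 2 := by nlinarith

-- crude estimate
lemma aux_crude {n : ℕ} (hn : 1 ≤ n) {b : ℝ} (hb : 0 ≤ b)
    (x : Fin n → ℝ) (hx : ∀ j, |x j| ≤ b) :
    |Real.log (∑ j, Real.exp (x j)) - Real.log n| ≤ b := by
  have hn0 : (0:ℝ) < n := by exact_mod_cast hn
  have : Nonempty (Fin n) := ⟨⟨0, hn⟩⟩
  have hpos : (0:ℝ) < ∑ j, Real.exp (x j) :=
    Finset.sum_pos (fun j _ => Real.exp_pos _) Finset.univ_nonempty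
  rw [abs_le]
  constructor
  · have hlo : (n : ℝ) * Real.exp (-b) ≤ ∑ j, Real.exp (x j) := by
      calc (n:ℝ) * Real.exp (-b) = ∑ j : Fin n, Real.exp (-b) := by
            rw [Finset.sum_const, Finset.card_univ, Fintype.card_fin, nsmul_eq_mul]
        _ ≤ ∑ j, Real.exp (x j) := by
            apply Finset.sum_le_sum
            intro j _
            apply Real.exp_le_exp.2
            linarith [(abs_le.1 (hx j)).1]
    have := Real.log_le_log (by positivity) hlo
    rw [Real.log_mul (ne_of_gt hn0) (ne_of_gt (Real.exp_pos _)), Real.log_exp] at this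
    linarith
  · have hhi : (∑ j, Real.exp (x j)) ≤ (n : ℝ) * Real.exp b := by
      calc (∑ j, Real.exp (x j)) ≤ ∑ j : Fin n, Real.exp b := by
            apply Finset.sum_le_sum
            intro j _
            exact Real.exp_le_exp.2 (abs_le.1 (hx j)).2
        _ = (n:ℝ) * Real.exp b := by
            rw [Finset.sum_const, Finset.card_univ, Fintype.card_fin, nsmul_eq_mul]
    have := Real.log_le_log hpos hhi
    rw [Real.log_mul (ne_of_gt hn0) (ne_of_gt (Real.exp_pos _)), Real.log_exp] at this
    linarith

theorem stmt_14 (C : ℝ) (hC : 0 < C) :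
    ∃ C' : ℝ, 0 < C' ∧ ∀ n : ℕ, 2 ≤ n → ∀ P : Matrix (Fin n) (Fin n) ℝ,
      ∀ w v : Fin n → ℝ,
      (∀ i, |w i| ≤ C / Real.sqrt n) → (∀ i, |v i| ≤ C / Real.sqrt n) →
      |((∑ i, w i * ∑ j, P i j * v j)
          - ∑ i, Real.log (∑ j, Real.exp (w i * v j)))
        - (∑ i, w i * ∑ j, P i j * v j)
        + (1 / n) * (∑ i, w i) * (∑ j, v j)
        + (1 / (2 * n)) * ∑ i, ∑ j, (w i) ^ 2 * (v j) ^ 2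
        + n * Real.log n| ≤ C' / n := by
  refine ⟨4 * C ^ 6 + 20 * C ^ 4 + 1, by positivity, ?_⟩
  intro n hn2 P w v hw hv
  have hn1 : 1 ≤ n := le_trans (by norm_num) hn2
  have hn0 : (0:ℝ) < n := by exact_mod_cast hn1
  have hsq : Real.sqrt n * Real.sqrt n = n := Real.mul_self_sqrt (le_of_lt hn0)
  -- bound on products
  have hwv : ∀ i j, |w i * v j| ≤ C ^ 2 / n := by
    intro i j
    rw [abs_mul]
    calc |w i| * |v j| ≤ (C / Real.sqrt n) * (C / Real.sqrt n) :=
          mul_le_mul (hw i) (hv j) (abs_nonneg _) (by positivity)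
      _ = C ^ 2 / n := by rw [div_mul_div_comm, hsq]; ring
  -- the key identity
  have key : ((∑ i, w i * ∑ j, P i j * v j)
          - ∑ i, Real.log (∑ j, Real.exp (w i * v j)))
        - (∑ i, w i * ∑ j, P i j * v j)
        + (1 / n) * (∑ i, w i) * (∑ j, v j)
        + (1 / (2 * n)) * ∑ i, ∑ j, (w i) ^ 2 * (v j) ^ 2
        + (n:ℝ) * Real.log n
      = ∑ i, ((Real.log n + (1 / n) * ∑ j, w i * v j + (1 / (2 * n)) * ∑ j, (w i * v j) ^ 2)
            - Real.log (∑ j, Real.exp (w i * v j))) := by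
    rw [Finset.sum_sub_distrib, Finset.sum_add_distrib, Finset.sum_add_distrib,
      Finset.sum_const, Finset.card_univ, Fintype.card_fin, nsmul_eq_mul]
    have e1 : ∑ i : Fin n, (1 / (n:ℝ)) * ∑ j, w i * v j
        = (1 / n) * ((∑ i, w i) * (∑ j, v j)) := by
      rw [← Finset.mul_sum]
      congr 1
      rw [Finset.sum_mul]
      exact Finset.sum_congr rfl fun i _ => (Finset.mul_sum _ _ _).symm
    have e2 : ∑ i : Fin n, (1 / (2 * (n:ℝ))) * ∑ j, (w i * v j) ^ 2
        = (1 / (2 * n)) * ∑ i, ∑ j, (w i) ^ 2 * (v j) ^ 2 := by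
      rw [← Finset.mul_sum]
      congr 1
      apply Finset.sum_congr rfl
      intro i _
      apply Finset.sum_congr rfl
      intro j _
      ring
    rw [e1, e2]
    ring
  rw [key]
  by_cases hbig : 4 * C ^ 2 ≤ (n:ℝ)
  · -- large n : sharp estimate
    have ha4 : C ^ 2 / n ≤ 1 / 4 := by
      rw [div_le_div_iff₀ hn0 (by norm_num)]
      linarith
    calc |∑ i, ((Real.log n + (1 / n) * ∑ j, w i * v j
            + (1 / (2 * n)) * ∑ j, (w i * v j) ^ 2)
            - Real.log (∑ j, Real.exp (w i * v j)))|
        ≤ ∑ i : Fin n, |(Real.log n + (1 / n) * ∑ j, w i * v j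
            + (1 / (2 * n)) * ∑ j, (w i * v j) ^ 2)
            - Real.log (∑ j, Real.exp (w i * v j))| := Finset.abs_sum_le_sum_abs _ _
      _ ≤ ∑ i : Fin n, 9 * (C ^ 2 / n) ^ 2 := by
          apply Finset.sum_le_sum
          intro i _
          rw [abs_sub_comm]
          exact aux_main hn1 ha4 (fun j => w i * v j) (fun j => hwv i j)
      _ = (n:ℝ) * (9 * (C ^ 2 / n) ^ 2) := by
          rw [Finset.sum_const, Finset.card_univ, Fintype.card_fin, nsmul_eq_mul]
      _ = 9 * C ^ 4 / n := by field_simp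
      _ ≤ (4 * C ^ 6 + 20 * C ^ 4 + 1) / n := by
          gcongr
          nlinarith [pow_nonneg hC.le 4, pow_nonneg hC.le 6]
  · -- small n : crude estimate
    push_neg at hbig
    have hb : (0:ℝ) ≤ C ^ 2 / n := by positivity
    calc |∑ i, ((Real.log n + (1 / n) * ∑ j, w i * v j
            + (1 / (2 * n)) * ∑ j, (w i * v j) ^ 2)
            - Real.log (∑ j, Real.exp (w i * v j)))|
        ≤ ∑ i : Fin n, |(Real.log n + (1 / n) * ∑ j, w i * v j
            + (1 / (2 * n)) * ∑ j, (w i * v j) ^ 2)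
            - Real.log (∑ j, Real.exp (w i * v j))| := Finset.abs_sum_le_sum_abs _ _
      _ ≤ ∑ i : Fin n, (2 * C ^ 2 + C ^ 4) / n := by
          apply Finset.sum_le_sum
          intro i _
          have h1 : |Real.log (∑ j, Real.exp (w i * v j)) - Real.log n| ≤ C ^ 2 / n :=
            aux_crude hn1 hb (fun j => w i * v j) (fun j => hwv i j)
          have h2 : |(1 / (n:ℝ)) * ∑ j, w i * v j| ≤ C ^ 2 / n := by
            rw [abs_mul, abs_of_pos (by positivity : (0:ℝ) < 1 / (n:ℝ))]
            calc (1 / (n:ℝ)) * |∑ j, w i * v j|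
                ≤ (1 / n) * ∑ j : Fin n, |w i * v j| := by
                  apply mul_le_mul_of_nonneg_left (Finset.abs_sum_le_sum_abs _ _) (by positivity)
              _ ≤ (1 / n) * ∑ j : Fin n, C ^ 2 / n := by
                  apply mul_le_mul_of_nonneg_left (Finset.sum_le_sum fun j _ => hwv i j)
                    (by positivity)
              _ = C ^ 2 / n := by
                  rw [Finset.sum_const, Finset.card_univ, Fintype.card_fin, nsmul_eq_mul]
                  field_simp
          have h3 : |(1 / (2 * (n:ℝ))) * ∑ j, (w i * v j) ^ 2| ≤ C ^ 4 / n := by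
            rw [abs_mul, abs_of_pos (by positivity : (0:ℝ) < 1 / (2 * (n:ℝ)))]
            have hterm : ∀ j : Fin n, (w i * v j) ^ 2 ≤ (C ^ 2 / n) ^ 2 := by
              intro j
              rw [← sq_abs]
              apply pow_le_pow_left₀ (abs_nonneg _) (hwv i j)
            calc (1 / (2 * (n:ℝ))) * |∑ j, (w i * v j) ^ 2|
                ≤ (1 / (2 * n)) * ∑ j : Fin n, (C ^ 2 / n) ^ 2 := by
                  apply mul_le_mul_of_nonneg_left _ (by positivity)
                  rw [abs_of_nonneg (Finset.sum_nonneg fun j _ => sq_nonneg _)]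
                  exact Finset.sum_le_sum fun j _ => hterm j
              _ = C ^ 4 / (2 * n * n) := by
                  rw [Finset.sum_const, Finset.card_univ, Fintype.card_fin, nsmul_eq_mul]
                  field_simp
              _ ≤ C ^ 4 / n := by
                  have hn1' : (1:ℝ) ≤ n := by exact_mod_cast hn1
                  apply div_le_div_of_nonneg_left (by positivity) hn0
                  nlinarith
          calc |(Real.log n + (1 / n) * ∑ j, w i * v j
              + (1 / (2 * n)) * ∑ j, (w i * v j) ^ 2)
              - Real.log (∑ j, Real.exp (w i * v j))|
              ≤ |Real.log n - Real.log (∑ j, Real.exp (w i * v j))|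
                + |(1 / (n:ℝ)) * ∑ j, w i * v j|
                + |(1 / (2 * (n:ℝ))) * ∑ j, (w i * v j) ^ 2| := by
                  have e : (Real.log n + (1 / (n:ℝ)) * ∑ j, w i * v j
                      + (1 / (2 * (n:ℝ))) * ∑ j, (w i * v j) ^ 2)
                      - Real.log (∑ j, Real.exp (w i * v j))
                      = (Real.log n - Real.log (∑ j, Real.exp (w i * v j)))
                        + (1 / (n:ℝ)) * ∑ j, w i * v j
                        + (1 / (2 * (n:ℝ))) * ∑ j, (w i * v j) ^ 2 := by ring
                  rw [e]
                  exact abs_add_three _ _ _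
            _ ≤ C ^ 2 / n + C ^ 2 / n + C ^ 4 / n := by
                rw [abs_sub_comm] at h1
                linarith
            _ = (2 * C ^ 2 + C ^ 4) / n := by ring
      _ = 2 * C ^ 2 + C ^ 4 := by
          rw [Finset.sum_const, Finset.card_univ, Fintype.card_fin, nsmul_eq_mul]
          field_simp
      _ ≤ (4 * C ^ 6 + 20 * C ^ 4 + 1) / n := by
          rw [le_div_iff₀ hn0]
          have hpos2 : (0:ℝ) < 2 * C ^ 2 + C ^ 4 := by positivity
          have hmul := mul_le_mul_of_nonneg_right hbig.le hpos2.le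
          nlinarith [pow_nonneg hC.le 4, pow_nonneg hC.le 6]
end
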